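/- Let N ≥ 4 be an integer. In SL_2(ℤ), the matrix ω = [[1+N², −N²],[N², 1−N²]] lies in E_2(N²ℤ) but does not lie in F_2(Nℤ); in particular, E_2(N²ℤ) is not contained in F_2(Nℤ). -/

import Mathlib

open Matrix

/-- `SL n A` is the special linear group `SL_n(A)`. -/
abbrev SL (n : ℕ) (A : Type) [CommRing A] : Type := Matrix.SpecialLinearGroup (Fin n) A

/-- The elementary matrix `e_{ij}(a) = 1_n + a·e_{ij}` as an element of `SL_n(A)` (for `i ≠ j`). -/
def elem (A : Type) [CommRing A] {n : ℕ} (i j : Fin n) (hij : i ≠ j) (a : A) : SL n A :=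
  ⟨Matrix.transvection i j a, Matrix.det_transvection_of_ne i j hij a⟩

/-- The true elementary subgroup `F_n(π)`: the subgroup of `SL_n(A)` generated by the
elementary matrices with coefficients in the ideal `π`. -/
def Fgrp (A : Type) [CommRing A] (n : ℕ) (π : Ideal A) : Subgroup (SL n A) :=
  Subgroup.closure {x | ∃ (i j : Fin n) (hij : i ≠ j), ∃ a ∈ π, x = elem A i j hij a}

/-- The (absolute) elementary subgroup `E_n(A)`: the subgroup of `SL_n(A)` generated by all
elementary matrices. -/
def EgrpAbs (A : Type) [CommRing A] (n : ℕ) : Subgroup (SL n A) :=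
  Subgroup.closure {x | ∃ (i j : Fin n) (hij : i ≠ j) (a : A), x = elem A i j hij a}

/-- The normal (relative) elementary subgroup `E_n(π)`: the normal subgroup of `E_n(A)`
generated by the elementary matrices with coefficients in `π`, viewed inside `SL_n(A)`;
as a subgroup of `SL_n(A)` it is generated by all `E_n(A)`-conjugates of the elementary
matrices with coefficients in `π`. -/
def Egrp (A : Type) [CommRing A] (n : ℕ) (π : Ideal A) : Subgroup (SL n A) :=
  Subgroup.closure {x | ∃ g ∈ EgrpAbs A n, ∃ (i j : Fin n) (hij : i ≠ j), ∃ a ∈ π,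
    x = g * elem A i j hij a * g⁻¹}

/-- The matrix `ω = [[1+N², −N²],[N², 1−N²]] ∈ SL_2(ℤ)`. -/
def omegaMat (N : ℤ) : SL 2 ℤ :=
  ⟨!![1 + N ^ 2, -N ^ 2; N ^ 2, 1 - N ^ 2], by rw [Matrix.det_fin_two_of]; ring⟩

/-! ### Auxiliary development -/

private lemma elem_val (A : Type) [CommRing A] {n : ℕ} (i j : Fin n) (hij : i ≠ j) (a : A) :
    ((elem A i j hij a : SL n A) : Matrix (Fin n) (Fin n) A) = Matrix.transvection i j a := rfl

private def Eu (a : ℤ) : SL 2 ℤ := elem ℤ 0 1 (by decide) a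
private def El (a : ℤ) : SL 2 ℤ := elem ℤ 1 0 (by decide) a

private def letterM (x : Bool × ℤ) : SL 2 ℤ := if x.1 then Eu x.2 else El x.2

private def wp (l : List (Bool × ℤ)) : SL 2 ℤ := (l.map letterM).prod

private lemma wp_nil : wp [] = 1 := rfl

private lemma wp_cons (x : Bool × ℤ) (l : List (Bool × ℤ)) :
    wp (x :: l) = letterM x * wp l := by
  simp [wp]

private lemma Eu_mul_Eu (a b : ℤ) : Eu a * Eu b = Eu (a + b) := by
  apply Subtype.ext
  simp only [Eu, elem, Matrix.SpecialLinearGroup.coe_mul]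
  exact Matrix.transvection_mul_transvection_same 0 1 (by decide) a b

private lemma El_mul_El (a b : ℤ) : El a * El b = El (a + b) := by
  apply Subtype.ext
  simp only [El, elem, Matrix.SpecialLinearGroup.coe_mul]
  exact Matrix.transvection_mul_transvection_same 1 0 (by decide) a b

private lemma Eu_zero : Eu 0 = 1 := by
  apply Subtype.ext
  simp [Eu, elem, Matrix.transvection_zero]

private lemma El_zero : El 0 = 1 := by
  apply Subtype.ext
  simp [El, elem, Matrix.transvection_zero]

private lemma letterM_zero (b : Bool) : letterM (b, 0) = 1 := by
  cases b <;> simp [letterM, Eu_zero, El_zero]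

private lemma letterM_mul (b : Bool) (a c : ℤ) :
    letterM (b, a) * letterM (b, c) = letterM (b, a + c) := by
  cases b <;> simp [letterM, Eu_mul_Eu, El_mul_El]

/-- the coefficient functions `p`, `q`: the image of the vector `(1,1)`. -/
private def pp (M : SL 2 ℤ) : ℤ := M.1 0 0 + M.1 0 1
private def qq (M : SL 2 ℤ) : ℤ := M.1 1 0 + M.1 1 1

private lemma pp_one : pp 1 = 1 := by simp [pp]
private lemma qq_one : qq 1 = 1 := by simp [qq]

private lemma pp_Eu_mul (m : ℤ) (M : SL 2 ℤ) : pp (Eu m * M) = pp M + m * qq M := by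
  simp only [pp, qq, Eu, elem_val, Matrix.SpecialLinearGroup.coe_mul,
    Matrix.transvection_mul_apply_same]
  ring

private lemma qq_Eu_mul (m : ℤ) (M : SL 2 ℤ) : qq (Eu m * M) = qq M := by
  simp only [qq, Eu, elem_val, Matrix.SpecialLinearGroup.coe_mul]
  rw [Matrix.transvection_mul_apply_of_ne 0 1 1 0 (by decide) m,
    Matrix.transvection_mul_apply_of_ne 0 1 1 1 (by decide) m]

private lemma qq_El_mul (m : ℤ) (M : SL 2 ℤ) : qq (El m * M) = qq M + m * pp M := by
  simp only [pp, qq, El, elem_val, Matrix.SpecialLinearGroup.coe_mul,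
    Matrix.transvection_mul_apply_same]
  ring

private lemma pp_El_mul (m : ℤ) (M : SL 2 ℤ) : pp (El m * M) = pp M := by
  simp only [pp, El, elem_val, Matrix.SpecialLinearGroup.coe_mul]
  rw [Matrix.transvection_mul_apply_of_ne 1 0 0 0 (by decide) m,
    Matrix.transvection_mul_apply_of_ne 1 0 0 1 (by decide) m]

/-- key growth estimate for reduced words with big coefficients -/
private lemma growth : ∀ (t : List (Bool × ℤ)) (b : Bool) (m : ℤ),
    List.Chain' (fun x y => x.1 ≠ y.1) ((b, m) :: t) →
    (∀ x ∈ (b, m) :: t, 4 ≤ |x.2|) →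
    if b then 3 * |qq (wp ((b, m) :: t))| ≤ |pp (wp ((b, m) :: t))| ∧ 1 ≤ |qq (wp ((b, m) :: t))|
    else 3 * |pp (wp ((b, m) :: t))| ≤ |qq (wp ((b, m) :: t))| ∧ 1 ≤ |pp (wp ((b, m) :: t))|
  | [], b, m => by
    intro _ hbig
    have hm : 4 ≤ |m| := hbig (b, m) (by simp)
    have htri : |m| ≤ |1 + m * 1| + 1 := by
      have h := abs_add_le (1 + m * 1) (-1 : ℤ)
      have e : (1 : ℤ) + m * 1 + -1 = m := by ring
      rw [e] at h
      simpa using h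
    rw [wp_cons, wp_nil]
    cases b
    · simp only [letterM, Bool.false_eq_true, if_false, qq_El_mul, pp_El_mul, pp_one, qq_one,
        abs_one]
      omega
    · simp only [letterM, if_true, pp_Eu_mul, qq_Eu_mul, pp_one, qq_one, abs_one]
      omega
  | (b', k) :: t, b, m => by
    intro hchain hbig
    have hb' : b' ≠ b := by
      have := (List.isChain_cons_cons.mp hchain).1
      exact fun h => this h.symm
    have hm : 4 ≤ |m| := hbig (b, m) (by simp)
    have ih := growth t b' k (List.isChain_cons_cons.mp hchain).2
      (fun x hx => hbig x (List.mem_cons_of_mem _ hx))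
    set M := wp ((b', k) :: t) with hM
    have hrest : wp ((b, m) :: (b', k) :: t) = letterM (b, m) * M := wp_cons _ _
    cases b with
    | true =>
      have hb'' : b' = false := by cases b' <;> simp_all
      rw [hb''] at ih
      simp only [if_false, Bool.false_eq_true] at ih
      obtain ⟨h1, h2⟩ := ih
      rw [hrest]
      simp only [letterM, if_true, pp_Eu_mul, qq_Eu_mul, if_true]
      refine ⟨?_, by omega⟩
      have habs : |m * qq M| = |m| * |qq M| := abs_mul _ _
      have h4 : 4 * |qq M| ≤ |m| * |qq M| := by
        have := abs_nonneg (qq M)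
        nlinarith
      have htri : |m * qq M| ≤ |pp M + m * qq M| + |pp M| := by
        have h := abs_add_le (pp M + m * qq M) (-(pp M))
        rw [abs_neg] at h
        have e : pp M + m * qq M + -pp M = m * qq M := by ring
        rw [e] at h
        exact h
      have := abs_nonneg (pp M)
      omega
    | false =>
      have hb'' : b' = true := by cases b' <;> simp_all
      rw [hb''] at ih
      simp only [if_true] at ih
      obtain ⟨h1, h2⟩ := ih
      rw [hrest]
      simp only [letterM, if_false, Bool.false_eq_true, qq_El_mul, pp_El_mul]
      refine ⟨?_, by omega⟩
      have habs : |m * pp M| = |m| * |pp M| := abs_mul _ _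
      have h4 : 4 * |pp M| ≤ |m| * |pp M| := by
        have := abs_nonneg (pp M)
        nlinarith
      have htri : |m * pp M| ≤ |qq M + m * pp M| + |qq M| := by
        have h := abs_add_le (qq M + m * pp M) (-(qq M))
        rw [abs_neg] at h
        have e : qq M + m * pp M + -qq M = m * pp M := by ring
        rw [e] at h
        exact h
      have := abs_nonneg (qq M)
      omega

/-- reducedness predicate -/
private def Red (N : ℤ) (l : List (Bool × ℤ)) : Prop :=
  List.Chain' (fun x y => x.1 ≠ y.1) l ∧ ∀ x ∈ l, N ∣ x.2 ∧ x.2 ≠ 0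

/-- prepending a letter to a reduced word -/
private lemma step (N : ℤ) (b : Bool) (m : ℤ) (hm : N ∣ m) (l : List (Bool × ℤ))
    (hl : Red N l) : ∃ l', Red N l' ∧ wp l' = letterM (b, m) * wp l := by
  rcases eq_or_ne m 0 with rfl | hm0
  · exact ⟨l, hl, by rw [letterM_zero, one_mul]⟩
  rcases l with _ | ⟨⟨b', k⟩, t⟩
  · refine ⟨[(b, m)], ⟨List.isChain_singleton _, ?_⟩, rfl⟩
    rintro x hx
    simp only [List.mem_singleton] at hx
    subst hx
    exact ⟨hm, hm0⟩
  rcases eq_or_ne b' b with rfl | hbb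
  · rcases eq_or_ne (m + k) 0 with h0 | h0
    · refine ⟨t, ⟨(List.isChain_cons.mp hl.1).2, fun x hx => hl.2 x (List.mem_cons_of_mem _ hx)⟩, ?_⟩
      rw [wp_cons, ← mul_assoc, letterM_mul, h0, letterM_zero, one_mul]
    · refine ⟨(b', m + k) :: t, ⟨?_, ?_⟩, ?_⟩
      · rcases t with _ | ⟨y, t'⟩
        · exact List.isChain_singleton _
        · exact List.isChain_cons_cons.mpr ⟨(List.isChain_cons_cons.mp hl.1).1, (List.isChain_cons_cons.mp hl.1).2⟩
      · rintro x hx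
        rcases List.mem_cons.mp hx with rfl | hx
        · exact ⟨dvd_add hm (hl.2 (b', k) (List.mem_cons_self)).1, h0⟩
        · exact hl.2 x (List.mem_cons_of_mem _ hx)
      · rw [wp_cons, wp_cons, ← mul_assoc, letterM_mul]
  · refine ⟨(b, m) :: (b', k) :: t, ⟨List.isChain_cons_cons.mpr ⟨fun h => hbb h.symm, hl.1⟩, ?_⟩,
      (wp_cons _ _)⟩
    rintro x hx
    rcases List.mem_cons.mp hx with rfl | hx
    · exact ⟨hm, hm0⟩
    · exact hl.2 x hx

/-- any generator of `Fgrp` (or its inverse) is a `letterM` -/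
private lemma elem_inv {i j : Fin 2} (h : i ≠ j) (a : ℤ) :
    (elem ℤ i j h a)⁻¹ = elem ℤ i j h (-a) := by
  apply inv_eq_of_mul_eq_one_right
  apply Subtype.ext
  simp only [elem_val, Matrix.SpecialLinearGroup.coe_mul]
  rw [Matrix.transvection_mul_transvection_same i j h, add_neg_cancel, Matrix.transvection_zero]
  rfl

private lemma gen_is_letter {N : ℤ} {y : SL 2 ℤ}
    (hy : y ∈ ({x | ∃ (i j : Fin 2) (hij : i ≠ j), ∃ a ∈ Ideal.span {N}, x = elem ℤ i j hij a} :
      Set (SL 2 ℤ)) ∪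
      {x | ∃ (i j : Fin 2) (hij : i ≠ j), ∃ a ∈ Ideal.span {N}, x = elem ℤ i j hij a}⁻¹) :
    ∃ (b : Bool) (a : ℤ), N ∣ a ∧ y = letterM (b, a) := by
  have key : ∀ (i j : Fin 2) (hij : i ≠ j) (a : ℤ), N ∣ a →
      ∃ (b : Bool) (c : ℤ), N ∣ c ∧ elem ℤ i j hij a = letterM (b, c) := by
    intro i j hij a ha
    fin_cases i <;> fin_cases j <;> first
      | exact absurd rfl hij
      | exact ⟨true, a, ha, rfl⟩
      | exact ⟨false, a, ha, rfl⟩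
  rcases hy with ⟨i, j, hij, a, haI, rfl⟩ | hy
  · exact key i j hij a (Ideal.mem_span_singleton.mp haI)
  · rw [Set.mem_inv] at hy
    obtain ⟨i, j, hij, a, haI, hEq⟩ := hy
    have : y = elem ℤ i j hij (-a) := by
      rw [← elem_inv hij a, ← hEq, inv_inv]
    subst this
    exact key i j hij (-a) (dvd_neg.mpr (Ideal.mem_span_singleton.mp haI))

private lemma list_red (N : ℤ) : ∀ L : List (SL 2 ℤ),
    (∀ y ∈ L, y ∈ ({x | ∃ (i j : Fin 2) (hij : i ≠ j), ∃ a ∈ Ideal.span {N},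
        x = elem ℤ i j hij a} : Set (SL 2 ℤ)) ∪
      {x | ∃ (i j : Fin 2) (hij : i ≠ j), ∃ a ∈ Ideal.span {N}, x = elem ℤ i j hij a}⁻¹) →
    ∃ l, Red N l ∧ wp l = L.prod
  | [] => fun _ => ⟨[], ⟨List.isChain_nil, by simp⟩, rfl⟩
  | y :: L => by
    intro hL
    obtain ⟨l, hl, hwl⟩ := list_red N L fun z hz => hL z (List.mem_cons_of_mem _ hz)
    obtain ⟨b, a, ha, hy⟩ := gen_is_letter (hL y (List.mem_cons_self))
    obtain ⟨l', hl', hwl'⟩ := step N b a ha l hl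
    exact ⟨l', hl', by rw [hwl', hwl, List.prod_cons, hy]⟩

/-- every element of `Fgrp ℤ 2 (span {N})` is a product of a reduced word -/
private lemma mem_F_red {N : ℤ} {M : SL 2 ℤ} (hM : M ∈ Fgrp ℤ 2 (Ideal.span {N})) :
    ∃ l, Red N l ∧ wp l = M := by
  rw [Fgrp, ← Subgroup.mem_toSubmonoid, Subgroup.closure_toSubmonoid] at hM
  obtain ⟨L, hL, hprod⟩ := Submonoid.exists_list_of_mem_closure hM
  obtain ⟨l, hl, hwl⟩ := list_red N L hL
  exact ⟨l, hl, by rw [hwl, hprod]⟩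

private lemma pp_omega (N : ℤ) : pp (omegaMat N) = 1 := by
  simp [pp, omegaMat]

private lemma qq_omega (N : ℤ) : qq (omegaMat N) = 1 := by
  simp [qq, omegaMat]

/-- ω is not in F₂(Nℤ) -/
private lemma omega_not_in_F (N : ℤ) (hN : 4 ≤ N) :
    omegaMat N ∉ Fgrp ℤ 2 (Ideal.span {N}) := by
  intro hmem
  obtain ⟨l, hl, hwl⟩ := mem_F_red hmem
  rcases l with _ | ⟨⟨b, m⟩, t⟩
  · have h1 : (omegaMat N).1 0 1 = (1 : SL 2 ℤ).1 0 1 := by rw [← hwl]; rfl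
    simp only [omegaMat] at h1
    rw [Matrix.SpecialLinearGroup.coe_one, Matrix.one_apply_ne (by decide)] at h1
    simp only [Matrix.of_apply, Matrix.cons_val', Matrix.cons_val_one, Matrix.head_cons,
      Matrix.cons_val_zero, Matrix.empty_val', Matrix.cons_val_fin_one, Matrix.head_fin_const] at h1
    nlinarith
  · have hbig : ∀ x ∈ ((b, m) :: t), 4 ≤ |x.2| := by
      intro x hx
      obtain ⟨hdvd, hne⟩ := hl.2 x hx
      obtain ⟨c, hc⟩ := hdvd
      have hc0 : c ≠ 0 := by rintro rfl; rw [mul_zero] at hc; exact hne hc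
      have h1 : 1 ≤ |c| := Int.one_le_abs hc0
      have h2 : |x.2| = |N| * |c| := by rw [hc, abs_mul]
      have h3 : N ≤ |N| := le_abs_self N
      nlinarith [abs_nonneg c, abs_nonneg N]
    have := growth t b m hl.1 hbig
    rw [hwl] at this
    rw [pp_omega, qq_omega] at this
    cases b <;> simp at this

/-- ω is in E₂(N²ℤ) -/
private lemma omega_in_E (N : ℤ) : omegaMat N ∈ Egrp ℤ 2 (Ideal.span {N ^ 2}) := by
  apply Subgroup.subset_closure
  refine ⟨elem ℤ 1 0 (by decide) 1, ?_, 0, 1, (by decide), -N ^ 2, ?_, ?_⟩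
  · exact Subgroup.subset_closure ⟨1, 0, (by decide), 1, rfl⟩
  · exact Ideal.mem_span_singleton.mpr (dvd_neg.mpr dvd_rfl)
  · rw [elem_inv]
    apply Subtype.ext
    simp only [omegaMat, elem_val, Matrix.SpecialLinearGroup.coe_mul]
    ext i j
    fin_cases i <;> fin_cases j <;>
      simp [Matrix.transvection, Matrix.single, Matrix.mul_apply, Fin.sum_univ_two,
        Matrix.one_apply] <;> ring

/-- For an integer `N ≥ 4`, the matrix `ω = [[1+N², −N²],[N², 1−N²]]` lies in `E_2(N²ℤ)`
but not in `F_2(Nℤ)`; in particular `E_2(N²ℤ)` is not contained in `F_2(Nℤ)`. -/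
theorem omega_in_E_not_in_F (N : ℤ) (hN : 4 ≤ N) :
    omegaMat N ∈ Egrp ℤ 2 (Ideal.span {N ^ 2}) ∧
    omegaMat N ∉ Fgrp ℤ 2 (Ideal.span {N}) ∧
    ¬ Egrp ℤ 2 (Ideal.span {N ^ 2}) ≤ Fgrp ℤ 2 (Ideal.span {N}) := by
  refine ⟨omega_in_E N, omega_not_in_F N hN, fun hle => omega_not_in_F N hN (hle (omega_in_E N))⟩
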